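/- For the complete bipartite graph K_{r,s} with r, s ≥ 1, χ_dd(K_{r,s}) = 2. -/
import Mathlib


open SimpleGraph

/-- A vertex `v` dominates a set `S` if every vertex of `S` is in the closed
neighborhood of `v`. -/
def Dominates {V : Type*} (G : SimpleGraph V) (v : V) (S : Set V) : Prop :=
  ∀ u ∈ S, u = v ∨ G.Adj v u

/-- A proper coloring is a dominator coloring if every vertex dominates some
(nonempty) color class. -/
def IsDominatorColoring {V : Type*} (G : SimpleGraph V) {k : ℕ}
    (c : G.Coloring (Fin k)) : Prop :=
  ∀ v : V, ∃ i : Fin k, (∃ u, c u = i) ∧ Dominates G v {u | c u = i}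

/-- A proper coloring is a dominated coloring if every nonempty color class is
dominated by some vertex (adjacent to all of its members). -/
def IsDominatedColoring {V : Type*} (G : SimpleGraph V) {k : ℕ}
    (c : G.Coloring (Fin k)) : Prop :=
  ∀ i : Fin k, (∃ u, c u = i) → ∃ v : V, ∀ u, c u = i → G.Adj v u

/-- A domination coloring: every vertex dominates a color class and every
color class is dominated by a vertex. -/
def IsDominationColoring {V : Type*} (G : SimpleGraph V) {k : ℕ}
    (c : G.Coloring (Fin k)) : Prop :=
  IsDominatorColoring G c ∧ IsDominatedColoring G c

/-- The domination chromatic number χ_dd. -/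
noncomputable def ddChromaticNumber {V : Type*} (G : SimpleGraph V) : ℕ :=
  sInf {k | ∃ c : G.Coloring (Fin k), IsDominationColoring G c}

/-- The dominator chromatic number χ_d. -/
noncomputable def dChromaticNumber {V : Type*} (G : SimpleGraph V) : ℕ :=
  sInf {k | ∃ c : G.Coloring (Fin k), IsDominatorColoring G c}

/-- The dominated chromatic number χ_dom. -/
noncomputable def domChromaticNumber {V : Type*} (G : SimpleGraph V) : ℕ :=
  sInf {k | ∃ c : G.Coloring (Fin k), IsDominatedColoring G c}

/-- A dominating set of a graph. -/
def IsDominatingSet {V : Type*} (G : SimpleGraph V) (s : Finset V) : Prop :=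
  ∀ v : V, ∃ u ∈ s, u = v ∨ G.Adj u v

/-- The domination number γ. -/
noncomputable def dominationNumber {V : Type*} (G : SimpleGraph V) : ℕ :=
  sInf {k | ∃ s : Finset V, s.card = k ∧ IsDominatingSet G s}

theorem stmt10 (r s : ℕ) (hr : 1 ≤ r) (hs : 1 ≤ s) :
    ddChromaticNumber (completeBipartiteGraph (Fin r) (Fin s)) = 2 := by
  have a : Fin r := ⟨0, hr⟩
  have b : Fin s := ⟨0, hs⟩
  set G := completeBipartiteGraph (Fin r) (Fin s) with hG
  have hadjlr : ∀ (x : Fin r) (y : Fin s), G.Adj (Sum.inl x) (Sum.inr y) := by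
    intro x y; simp [hG]
  have hadjrl : ∀ (x : Fin s) (y : Fin r), G.Adj (Sum.inr x) (Sum.inl y) := by
    intro x y; simp [hG]
  have hprop : ∀ (u v : Fin r ⊕ Fin s), G.Adj u v →
      Sum.elim (fun _ => (0 : Fin 2)) (fun _ => 1) u ≠ Sum.elim (fun _ => (0:Fin 2)) (fun _ => 1) v := by
    rintro (x | x) (y | y) hadj <;> simp [hG] at hadj ⊢
  let c : G.Coloring (Fin 2) := Coloring.mk _ (fun {u v} h => hprop u v h)
  have hcl : ∀ x : Fin r, c (Sum.inl x) = 0 := fun _ => rfl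
  have hcr : ∀ x : Fin s, c (Sum.inr x) = 1 := fun _ => rfl
  have h2 : (2 : ℕ) ∈ {k | ∃ c : G.Coloring (Fin k), IsDominationColoring G c} := by
    refine ⟨c, ?_, ?_⟩
    · rintro (x | x)
      · refine ⟨1, ⟨Sum.inr b, hcr b⟩, ?_⟩
        rintro (u | u) hu
        · exact absurd (hu : c (Sum.inl u) = 1) (by simp [hcl])
        · exact Or.inr (hadjlr x u)
      · refine ⟨0, ⟨Sum.inl a, hcl a⟩, ?_⟩
        rintro (u | u) hu
        · exact Or.inr (hadjrl x u)
        · exact absurd (hu : c (Sum.inr u) = 0) (by simp [hcr])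
    · intro i hi
      fin_cases i
      · refine ⟨Sum.inr b, ?_⟩
        rintro (u | u) hu
        · exact hadjrl b u
        · exact absurd hu (by simp [hcr])
      · refine ⟨Sum.inl a, ?_⟩
        rintro (u | u) hu
        · exact absurd hu (by simp [hcl])
        · exact hadjlr a u
  refine le_antisymm (Nat.sInf_le h2) (le_csInf ⟨2, h2⟩ ?_)
  rintro k ⟨c', _, _⟩
  by_contra hk
  push_neg at hk
  interval_cases k
  · exact (c' (Sum.inl a)).elim0
  · exact c'.valid (hadjlr a b) (Subsingleton.elim _ _)
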